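/- Let g : X → ℝ be L-smooth and τ-weakly convex with 0 ≤ τ ≤ L. Then for all x, y ∈ X: ‖∇g(x) − ∇g(y)‖² ≤ (L − τ)⟨∇g(x) − ∇g(y), x − y⟩ + Lτ‖x − y‖². -/

import Mathlib

open scoped RealInnerProductSpace

section Aux

variable {X : Type*} [NormedAddCommGroup X] [InnerProductSpace ℝ X] [CompleteSpace X]

/-- Derivative of a function along a line. -/
lemma aux_hasDerivAt_line {f : X → ℝ} {F x d : X} {t : ℝ}
    (hf : HasGradientAt f F (x + t • d)) :
    HasDerivAt (fun s : ℝ => f (x + s • d)) ⟪F, d⟫ t := by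
  have h1 : HasDerivAt (fun s : ℝ => x + s • d) d t := by
    simpa using ((hasDerivAt_id t).smul_const d).const_add x
  have h2 := hf.hasFDerivAt.comp_hasDerivAt t h1
  simpa [InnerProductSpace.toDual_apply_apply, Function.comp_def] using h2

/-- Gradient inequality for convex differentiable functions. -/
lemma aux_convex_grad_ineq {h : X → ℝ} {H : X → X}
    (hconv : ConvexOn ℝ Set.univ h)
    (hgrad : ∀ z, HasGradientAt h (H z) z) (x y : X) :
    ⟪H x, y - x⟫ ≤ h y - h x := by
  set φ : ℝ → ℝ := fun t => h (x + t • (y - x)) with hφ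
  have φconv : ConvexOn ℝ Set.univ φ := by
    have := hconv.comp_affineMap (AffineMap.lineMap x y : ℝ →ᵃ[ℝ] X)
    have heq : (h ∘ (AffineMap.lineMap x y : ℝ →ᵃ[ℝ] X)) = φ := by
      funext t
      simp [hφ, AffineMap.lineMap_apply, add_comm]
    rw [heq] at this
    simpa using this
  have hder : HasDerivAt φ ⟪H x, y - x⟫ 0 := by
    have := aux_hasDerivAt_line (f := h) (x := x) (d := y - x) (t := 0)
      (by simpa using hgrad x)
    simpa using this
  have := φconv.le_slope_of_hasDerivAt (Set.mem_univ (0:ℝ)) (Set.mem_univ (1:ℝ))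
    one_pos hder
  have hslope : slope φ 0 1 = h y - h x := by
    simp [slope_def_field, hφ]
  rw [hslope] at this
  exact this

/-- Descent lemma. -/
lemma aux_descent {h : X → ℝ} {H : X → X} {M : ℝ} (hM : 0 < M)
    (hgrad : ∀ z, HasGradientAt h (H z) z)
    (hlip : ∀ a b, ‖H a - H b‖ ≤ M * ‖a - b‖) (x y : X) :
    h y ≤ h x + ⟪H x, y - x⟫ + M / 2 * ‖y - x‖ ^ 2 := by
  set d := y - x with hd
  set χ : ℝ → ℝ := fun t => h (x + t • d) - t * ⟪H x, d⟫ - M / 2 * t ^ 2 * ‖d‖ ^ 2 with hχ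
  have hχd : ∀ t : ℝ, HasDerivAt χ (⟪H (x + t • d), d⟫ - ⟪H x, d⟫ - M * t * ‖d‖ ^ 2) t := by
    intro t
    have h1 := aux_hasDerivAt_line (f := h) (x := x) (d := d) (t := t) (hgrad _)
    have h2 : HasDerivAt (fun s : ℝ => s * ⟪H x, d⟫) ⟪H x, d⟫ t := by
      simpa using (hasDerivAt_id t).mul_const ⟪H x, d⟫
    have h3 : HasDerivAt (fun s : ℝ => M / 2 * s ^ 2 * ‖d‖ ^ 2) (M * t * ‖d‖ ^ 2) t := by
      have := ((hasDerivAt_pow 2 t).const_mul (M / 2)).mul_const (‖d‖ ^ 2)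
      refine this.congr_deriv ?_
      simp only [Nat.cast_ofNat, Nat.add_one_sub_one, pow_one]
      ring
    exact (h1.sub h2).sub h3
  have hmono : AntitoneOn χ (Set.Icc (0:ℝ) 1) := by
    apply antitoneOn_of_deriv_nonpos (convex_Icc 0 1)
    · exact fun t _ => ((hχd t).continuousAt).continuousWithinAt
    · exact fun t _ => ((hχd t).differentiableAt).differentiableWithinAt
    · intro t ht
      rw [interior_Icc] at ht
      rw [(hχd t).deriv]
      have hineq : ⟪H (x + t • d) - H x, d⟫ ≤ M * t * ‖d‖ ^ 2 := by
        calc ⟪H (x + t • d) - H x, d⟫ ≤ ‖H (x + t • d) - H x‖ * ‖d‖ :=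
              real_inner_le_norm _ _
          _ ≤ (M * ‖(x + t • d) - x‖) * ‖d‖ := by
              have := hlip (x + t • d) x
              have hn : (0:ℝ) ≤ ‖d‖ := norm_nonneg _
              nlinarith [norm_nonneg (H (x + t • d) - H x)]
          _ = M * t * ‖d‖ ^ 2 := by
              have : ‖(x + t • d) - x‖ = t * ‖d‖ := by
                simp [norm_smul, abs_of_pos ht.1]
              rw [this]; ring
      rw [inner_sub_left] at hineq
      linarith
  have h01 : χ 1 ≤ χ 0 :=
    hmono (Set.mem_Icc.mpr ⟨le_refl 0, zero_le_one⟩)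
      (Set.mem_Icc.mpr ⟨zero_le_one, le_refl 1⟩) zero_le_one
  have h0 : χ 0 = h x := by simp [hχ]
  have h1 : χ 1 = h y - ⟪H x, d⟫ - M / 2 * ‖d‖ ^ 2 := by
    have hxy : x + (1:ℝ) • d = y := by simp [hd]
    simp only [hχ]
    rw [hxy]
    ring
  rw [h0, h1] at h01
  linarith

/-- Cocoercivity of the gradient of a convex smooth function. -/
lemma aux_cocoercive {h : X → ℝ} {H : X → X} {M : ℝ} (hM : 0 < M)
    (hconv : ConvexOn ℝ Set.univ h)
    (hgrad : ∀ z, HasGradientAt h (H z) z)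
    (hlip : ∀ a b, ‖H a - H b‖ ≤ M * ‖a - b‖) (x y : X) :
    ‖H x - H y‖ ^ 2 ≤ M * ⟪H x - H y, x - y⟫ := by
  have key : ∀ a b : X, h a + ⟪H a, b - a⟫ + 1 / (2 * M) * ‖H b - H a‖ ^ 2 ≤ h b := by
    intro a b
    set u := H b - H a with hu
    set z := b - (1 / M) • u with hz
    have hB := aux_convex_grad_ineq hconv hgrad a z
    have hC := aux_descent hM hgrad hlip b z
    have e1 : ⟪H a, z - a⟫ = ⟪H a, b - a⟫ - (1 / M) * ⟪H a, u⟫ := by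
      have : z - a = (b - a) - (1 / M) • u := by rw [hz]; abel
      rw [this, inner_sub_right, real_inner_smul_right]
    have e2 : ⟪H b, z - b⟫ = -(1 / M) * ⟪H b, u⟫ := by
      have : z - b = -((1 / M) • u) := by rw [hz]; abel
      rw [this, inner_neg_right, real_inner_smul_right]
      ring
    have e3 : ‖z - b‖ ^ 2 = (1 / M) ^ 2 * ‖u‖ ^ 2 := by
      have : z - b = -((1 / M) • u) := by rw [hz]; abel
      have h1M : |(1:ℝ) / M| = 1 / M := abs_of_pos (by positivity)
      rw [this, norm_neg, norm_smul, Real.norm_eq_abs, h1M]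
      ring
    have e4 : ⟪H b, u⟫ - ⟪H a, u⟫ = ‖u‖ ^ 2 := by
      rw [← inner_sub_left, ← hu, real_inner_self_eq_norm_sq]
    rw [e1] at hB
    rw [e2, e3] at hC
    have hM' : (0:ℝ) < M := hM
    have expand : h a + (⟪H a, b - a⟫ - 1 / M * ⟪H a, u⟫) ≤
        h b + -(1 / M) * ⟪H b, u⟫ + M / 2 * ((1 / M) ^ 2 * ‖u‖ ^ 2) := by linarith
    have hq : M / 2 * ((1 / M) ^ 2 * ‖u‖ ^ 2) = 1 / (2 * M) * ‖u‖ ^ 2 := by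
      field_simp
    have h5 : 1 / M * ⟪H b, u⟫ - 1 / M * ⟪H a, u⟫ = 1 / M * ‖u‖ ^ 2 := by
      rw [← mul_sub, e4]
    have h6 : 1 / M * ‖u‖ ^ 2 = 1 / (2 * M) * ‖u‖ ^ 2 + 1 / (2 * M) * ‖u‖ ^ 2 := by
      field_simp
      ring
    linarith [hB, hC, hq, h5, h6, expand]
  have k1 := key x y
  have k2 := key y x
  have e5 : ⟪H y, x - y⟫ = -⟪H y, y - x⟫ := by
    rw [← inner_neg_right]; congr 1; abel
  have e6 : ‖H x - H y‖ = ‖H y - H x‖ := by rw [← norm_neg]; congr 1; abel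
  have e7 : ⟪H x - H y, x - y⟫ = ⟪H x, x - y⟫ - ⟪H y, x - y⟫ := inner_sub_left _ _ _
  have e8 : ⟪H x, y - x⟫ = -⟪H x, x - y⟫ := by
    rw [← inner_neg_right]; congr 1; abel
  rw [e8] at k1
  rw [e6] at k2 ⊢
  have hsum : 1 / (2 * M) * ‖H y - H x‖ ^ 2 + 1 / (2 * M) * ‖H y - H x‖ ^ 2 ≤
      ⟪H x - H y, x - y⟫ := by linarith [k1, k2, e7]
  have h9 := mul_le_mul_of_nonneg_left hsum hM.le
  have h10 : M * (1 / (2 * M) * ‖H y - H x‖ ^ 2 + 1 / (2 * M) * ‖H y - H x‖ ^ 2) =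
      ‖H y - H x‖ ^ 2 := by field_simp; ring
  linarith [h9, h10.le, h10.ge]

end Aux

/-- Interpolation inequality for `L`-smooth and `τ`-weakly convex functions:
`‖∇g(x) − ∇g(y)‖² ≤ (L − τ)⟨∇g(x) − ∇g(y), x − y⟩ + Lτ‖x − y‖²`. -/
theorem smooth_weakly_convex_interpolation
    {X : Type*} [NormedAddCommGroup X] [InnerProductSpace ℝ X]
    [FiniteDimensional ℝ X]
    (g : X → ℝ) (L τ : ℝ) (hL : 0 < L) (hτ0 : 0 ≤ τ) (hτL : τ ≤ L)
    (hdiff : Differentiable ℝ g)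
    (hlip : ∀ x y : X, ‖gradient g x - gradient g y‖ ≤ L * ‖x - y‖)
    (hwc : ConvexOn ℝ Set.univ (fun x => g x + τ / 2 * ‖x‖ ^ 2)) :
    ∀ x y : X,
      ‖gradient g x - gradient g y‖ ^ 2 ≤
        (L - τ) * ⟪gradient g x - gradient g y, x - y⟫ + L * τ * ‖x - y‖ ^ 2 := by
  intro x y
  set h : X → ℝ := fun z => g z + τ / 2 * ‖z‖ ^ 2 with hh
  set H : X → X := fun z => gradient g z + τ • z with hH
  have hgrad : ∀ z, HasGradientAt h (H z) z := by
    intro z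
    rw [hasGradientAt_iff_hasFDerivAt]
    have h1 := (hdiff z).hasGradientAt.hasFDerivAt
    have h2 : HasFDerivAt (fun w : X => τ / 2 * ‖w‖ ^ 2)
        ((τ / 2) • (2 • (innerSL ℝ z))) z :=
      (hasStrictFDerivAt_norm_sq z).hasFDerivAt.const_smul (τ / 2)
    have h3 := h1.add h2
    refine (h3 : HasFDerivAt h _ z).congr_fderiv ?_
    ext w
    simp [InnerProductSpace.toDual_apply_apply, inner_add_left, real_inner_smul_left,
      two_smul, real_inner_comm]
    rw [h1.fderiv, InnerProductSpace.toDual_apply_apply, real_inner_comm]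
    simp only [hH, inner_add_right, real_inner_smul_right, real_inner_comm z w]
    ring
  have hlipH : ∀ a b : X, ‖H a - H b‖ ≤ (L + τ) * ‖a - b‖ := by
    intro a b
    have : H a - H b = (gradient g a - gradient g b) + τ • (a - b) := by
      simp [hH, smul_sub]; abel
    rw [this]
    calc ‖(gradient g a - gradient g b) + τ • (a - b)‖
        ≤ ‖gradient g a - gradient g b‖ + ‖τ • (a - b)‖ := norm_add_le _ _
      _ ≤ L * ‖a - b‖ + τ * ‖a - b‖ := by
          have := hlip a b
          have : ‖τ • (a - b)‖ = τ * ‖a - b‖ := by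
            rw [norm_smul, Real.norm_eq_abs, abs_of_nonneg hτ0]
          linarith [hlip a b, this.le, this.ge]
      _ = (L + τ) * ‖a - b‖ := by ring
  have hM : (0:ℝ) < L + τ := by linarith
  have hco := aux_cocoercive hM hwc hgrad hlipH x y
  set u := gradient g x - gradient g y with hu
  set d := x - y with hd
  have hHd : H x - H y = u + τ • d := by
    simp [hH, hu, hd, smul_sub]; abel
  rw [hHd] at hco
  have expand1 : ‖u + τ • d‖ ^ 2 = ‖u‖ ^ 2 + 2 * (τ * ⟪u, d⟫) + τ ^ 2 * ‖d‖ ^ 2 := by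
    rw [norm_add_sq_real, real_inner_smul_right, norm_smul, Real.norm_eq_abs,
      abs_of_nonneg hτ0, mul_pow]
  have expand2 : ⟪u + τ • d, d⟫ = ⟪u, d⟫ + τ * ‖d‖ ^ 2 := by
    rw [inner_add_left, real_inner_smul_left, real_inner_self_eq_norm_sq]
  rw [expand1, expand2] at hco
  nlinarith [hco]
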